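/- If p ≥ 3 is an even integer and λ ∈ ℝ with |λ| ≥ 1, then every real number escapes to infinity under iteration of f_λ: for every x ∈ ℝ, |f_λ^{∘n}(x)| → ∞ as n → ∞ (where f_λ^{∘n} denotes the n-th iterate of f_λ). In particular, ℝ is contained in the escaping set of f_λ. -/

import Mathlib

open Complex Finset Filter Nat

/-- The roots-of-unity filter identity: the sum of `ζ^(k*n)` over `k < p`. -/
lemma rootsum_eq (p : ℕ) (hp : 3 ≤ p) (n : ℕ) :
    ∑ k ∈ Finset.range p, (Complex.exp (2 * Real.pi * Complex.I / p)) ^ (k * n)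
      = if p ∣ n then (p : ℂ) else 0 := by
  have hp0 : (p : ℕ) ≠ 0 := by omega
  have hprim : IsPrimitiveRoot (Complex.exp (2 * Real.pi * Complex.I / p)) p :=
    Complex.isPrimitiveRoot_exp p hp0
  set ζ := Complex.exp (2 * Real.pi * Complex.I / p) with hζ
  have hsum : ∀ k, ζ ^ (k * n) = (ζ ^ n) ^ k := by
    intro k; rw [← pow_mul, Nat.mul_comm]
  simp only [hsum]
  by_cases hdvd : p ∣ n
  · have h1 : ζ ^ n = 1 := (hprim.pow_eq_one_iff_dvd n).mpr hdvd
    simp [h1, hdvd]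
  · have h1 : ζ ^ n ≠ 1 := fun h => hdvd ((hprim.pow_eq_one_iff_dvd n).mp h)
    rw [geom_sum_eq h1]
    have : (ζ ^ n) ^ p = 1 := by
      rw [← pow_mul, Nat.mul_comm, pow_mul, hprim.pow_eq_one, one_pow]
    simp [this, hdvd]

/-- Key step: for any real `y`, `f y` is real and of absolute value at least `|y| + 1`. -/
lemma key_step (p : ℕ) (hp : 3 ≤ p) (hpeven : Even p)
    (lam : ℝ) (hlam : 1 ≤ |lam|)
    (f : ℂ → ℂ)
    (hf : ∀ z : ℂ, f z = lam * ∑ k ∈ Finset.range p,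
      Complex.exp ((Complex.exp (2 * Real.pi * Complex.I / p)) ^ k * z))
    (y : ℝ) : ∃ y' : ℝ, f y = (y' : ℂ) ∧ |y| + 1 ≤ |y'| := by
  set ζ := Complex.exp (2 * Real.pi * Complex.I / p) with hζ
  -- the real series
  set g : ℕ → ℝ := fun n => if p ∣ n then (p : ℝ) * y ^ n / (n ! : ℝ) else 0 with hg
  have hg_nonneg : ∀ n, 0 ≤ g n := by
    intro n
    simp only [hg]
    split_ifs with h
    · have hne : Even n := by
        obtain ⟨m, hm⟩ := h
        exact hm ▸ hpeven.mul_right m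
      exact div_nonneg (mul_nonneg (Nat.cast_nonneg p) (hne.pow_nonneg y)) (Nat.cast_nonneg _)
    · exact le_refl 0
  have hg_summable : Summable g := by
    apply Summable.of_norm_bounded
      ((Real.summable_pow_div_factorial |y|).mul_left (p : ℝ))
    intro n
    simp only [hg]
    split_ifs with h
    · simp only [Real.norm_eq_abs, abs_div, abs_mul, Nat.abs_cast, _root_.abs_pow,
        mul_div_assoc, le_refl]
    · simp; positivity
  -- each exponential as a tsum
  have hexp : ∀ k : ℕ, Complex.exp (ζ ^ k * y) = ∑' n : ℕ, (ζ ^ k * y) ^ n / n ! := by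
    intro k
    rw [Complex.exp_eq_exp_ℂ, NormedSpace.exp_eq_tsum_div]
  -- swap the finite sum and the tsum
  have hswap : ∑ k ∈ Finset.range p, Complex.exp (ζ ^ k * (y : ℂ))
      = ∑' n : ℕ, ∑ k ∈ Finset.range p, (ζ ^ k * (y : ℂ)) ^ n / n ! := by
    simp only [hexp]
    exact (Summable.tsum_finsetSum (fun k _ => NormedSpace.expSeries_div_summable (𝔸 := ℂ) (ζ ^ k * (y : ℂ)))).symm
  have hterm : ∀ n : ℕ, (∑ k ∈ Finset.range p, (ζ ^ k * (y : ℂ)) ^ n / n !) = ((g n : ℝ) : ℂ) := by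
    intro n
    have : ∀ k, (ζ ^ k * (y : ℂ)) ^ n / n ! = ζ ^ (k * n) * ((y : ℂ) ^ n / n !) := by
      intro k
      rw [mul_pow, ← pow_mul, mul_div_assoc]
    simp only [this, ← Finset.sum_mul]
    rw [rootsum_eq p hp n]
    simp only [hg]
    split_ifs with h
    · push_cast; ring
    · simp
  have hsum_eq : ∑ k ∈ Finset.range p, Complex.exp (ζ ^ k * (y : ℂ))
      = ((∑' n, g n : ℝ) : ℂ) := by
    rw [hswap, Complex.ofReal_tsum]
    exact tsum_congr hterm
  set T : ℝ := ∑' n, g n with hT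
  refine ⟨lam * T, ?_, ?_⟩
  · rw [hf, hsum_eq]; push_cast; ring
  · -- lower bound on T
    have hfact_pos : (0 : ℝ) < (p ! : ℝ) := by positivity
    have hlower : (p : ℝ) + (p : ℝ) * |y| ^ p / (p ! : ℝ) ≤ T := by
      have h2 : ∑ n ∈ ({0, p} : Finset ℕ), g n ≤ T :=
        Summable.sum_le_tsum _ (fun n _ => hg_nonneg n) hg_summable
      have h0p : (0 : ℕ) ≠ p := by omega
      rw [Finset.sum_pair h0p] at h2
      have hg0 : g 0 = p := by simp [hg]
      have hgp : g p = (p : ℝ) * |y| ^ p / (p ! : ℝ) := by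
        simp only [hg, if_pos dvd_rfl]
        rw [hpeven.pow_abs]
      rw [hg0, hgp] at h2
      exact h2
    have hkey : |y| + 1 ≤ (p : ℝ) + (p : ℝ) * |y| ^ p / (p ! : ℝ) := by
      set t : ℝ := |y| with ht
      have ht0 : 0 ≤ t := abs_nonneg y
      rcases le_or_gt t ((p : ℝ) - 1) with hcase | hcase
      · have h1 : t + 1 ≤ (p : ℝ) := by linarith
        have h2 : (0 : ℝ) ≤ (p : ℝ) * t ^ p / (p ! : ℝ) := by positivity
        linarith
      · -- t > p - 1 ≥ 2
        have hp1 : (1 : ℝ) ≤ (p : ℝ) - 1 := by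
          have : (3 : ℝ) ≤ p := by exact_mod_cast hp
          linarith
        have htp : ((p : ℝ) - 1) ≤ t := le_of_lt hcase
        have hfacle : ((p - 1)! : ℝ) ≤ t ^ (p - 1) := by
          calc ((p - 1)! : ℝ) ≤ ((p - 1) ^ (p - 1) : ℕ) := by
                exact_mod_cast Nat.factorial_le_pow (p - 1)
            _ ≤ t ^ (p - 1) := by
                push_cast
                apply pow_le_pow_left₀ (by positivity)
                rw [Nat.cast_sub (by omega)]
                simpa using htp
        have hfac : ((p ! : ℕ) : ℝ) = (p : ℝ) * (((p-1)! : ℕ) : ℝ) := by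
          have : p ! = p * (p - 1)! := by
            conv_lhs => rw [show p = (p - 1) + 1 by omega]
            rw [Nat.factorial_succ]
            congr 1
            omega
          exact_mod_cast this
        have htpow : t ^ p = t * t ^ (p - 1) := by
          conv_lhs => rw [show p = 1 + (p - 1) by omega]
          rw [pow_add, pow_one]
        have hgoal : t ≤ (p : ℝ) * t ^ p / (p ! : ℝ) := by
          rw [hfac, htpow]
          rw [le_div_iff₀ (by positivity)]
          have : t * ((p - 1)! : ℝ) ≤ t * t ^ (p - 1) := by
            apply mul_le_mul_of_nonneg_left hfacle ht0
          nlinarith [(Nat.cast_pos (α := ℝ)).mpr (Nat.factorial_pos (p - 1))]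
        have : (1 : ℝ) ≤ p := by
          have : (3 : ℝ) ≤ p := by exact_mod_cast hp
          linarith
        linarith
    have hTpos : 0 < T := by
      have : (0:ℝ) < (p : ℝ) + (p : ℝ) * |y| ^ p / (p ! : ℝ) := by positivity
      linarith
    calc |y| + 1 ≤ T := le_trans hkey hlower
      _ = 1 * T := (one_mul T).symm
      _ ≤ |lam| * T := by apply mul_le_mul_of_nonneg_right hlam (le_of_lt hTpos)
      _ = |lam * T| := by rw [abs_mul, abs_of_pos hTpos]

theorem real_line_escapes (p : ℕ) (hp : 3 ≤ p) (hpeven : Even p)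
    (lam : ℝ) (hlam : 1 ≤ |lam|)
    (f : ℂ → ℂ)
    (hf : ∀ z : ℂ, f z = lam * ∑ k ∈ Finset.range p,
      Complex.exp ((Complex.exp (2 * Real.pi * Complex.I / p)) ^ k * z))
    (x : ℝ) :
    Filter.Tendsto (fun n : ℕ => ‖f^[n] (x : ℂ)‖) Filter.atTop Filter.atTop := by
  have hstep := key_step p hp hpeven lam hlam f hf
  have hiter : ∀ n : ℕ, ∃ y : ℝ, f^[n] (x : ℂ) = (y : ℂ) ∧ |x| + n ≤ |y| := by
    intro n
    induction n with
    | zero => exact ⟨x, by simp⟩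
    | succ n ih =>
      obtain ⟨y, hy, hle⟩ := ih
      obtain ⟨y', hy', hle'⟩ := hstep y
      refine ⟨y', ?_, ?_⟩
      · rw [Function.iterate_succ_apply', hy, hy']
      · push_cast
        linarith
  apply tendsto_atTop_mono (f := fun n : ℕ => (n : ℝ))
  · intro n
    obtain ⟨y, hy, hle⟩ := hiter n
    rw [hy, Complex.norm_real, Real.norm_eq_abs]
    have := abs_nonneg x
    linarith
  · exact tendsto_natCast_atTop_atTop
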